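/- Let f:(0,∞)→(0,∞) be a strictly increasing continuous bijection with inverse f^{-1} satisfying f(R)/f(r) ≤ c(R/r)^{γ} for 0<r≤R with c,γ>0, let α ∈ (0,1) and d ≥ 1. Then there is a constant C>0 such that for all b>0, ∫_{f(1/b)^{-1/α}}^{∞} ∫_{b ≤ |y| ≤ f^{-1}(s^{-α})} ∫_{f(1/|y|)^{-1}}^{2s^{α}} (f^{-1}(1/r))^{d+1} s^{-α-1} dr dy ds ≤ C b^{-1}, where the inner spatial integral is over y ∈ ℝ^d. -/

import Mathlib

open MeasureTheory

set_option maxHeartbeats 1000000 in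
theorem stmt_16 (d : ℕ) (hd : 1 ≤ d) (f finv : ℝ → ℝ) (c γ α : ℝ)
    (hc : 0 < c) (hγ : 0 < γ) (hα0 : 0 < α) (hα1 : α < 1)
    (hfpos : ∀ x > 0, 0 < f x)
    (hmono : StrictMonoOn f (Set.Ioi 0))
    (hcont : ContinuousOn f (Set.Ioi 0))
    (hleft : ∀ x > 0, finv (f x) = x)
    (hright : ∀ y > 0, 0 < finv y ∧ f (finv y) = y)
    (hscal : ∀ r R : ℝ, 0 < r → r ≤ R → f R / f r ≤ c * (R / r) ^ γ) :
    ∃ C > 0, ∀ b > 0,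
      (∫ s in Set.Ioi ((f b⁻¹) ^ (-(1 / α))),
        ∫ y in {y : EuclideanSpace ℝ (Fin d) | b ≤ ‖y‖ ∧ ‖y‖ ≤ finv (s ^ (-α))},
          ∫ r in Set.Ioc (f ‖y‖⁻¹)⁻¹ (2 * s ^ α),
            (finv r⁻¹) ^ (d + 1) * s ^ (-α - 1)) ≤ C * b⁻¹ := by
  classical
  haveI : Nonempty (Fin d) := ⟨⟨0, hd⟩⟩
  set β : ℝ := min (1 / (2 * γ)) (1 / 2) with hβdef
  have hβ0 : 0 < β := lt_min (by positivity) (by norm_num)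
  have hβhalf : β ≤ 1 / 2 := min_le_right _ _
  have hβ1 : β < 1 := lt_of_le_of_lt hβhalf (by norm_num)
  have hβγ : β * γ ≤ 1 / 2 := by
    have h : β ≤ 1 / (2 * γ) := min_le_left _ _
    calc β * γ ≤ (1 / (2 * γ)) * γ := by nlinarith
    _ = 1 / 2 := by field_simp
  have hβγ1 : β * γ < 1 := lt_of_le_of_lt hβγ (by norm_num)
  have hβinvγ : β ≤ 1 / γ := by
    rw [le_div_iff₀ hγ]; linarith
  -- monotonicity of finv on positives
  have hfinvmono : ∀ u v : ℝ, 0 < u → u ≤ v → finv u ≤ finv v := by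
    intro u v hu huv
    by_contra h
    push_neg at h
    have h1 := hright u hu
    have h2 := hright v (lt_of_lt_of_le hu huv)
    have := hmono (Set.mem_Ioi.2 h2.1) (Set.mem_Ioi.2 h1.1) h
    rw [h1.2, h2.2] at this
    exact absurd this (not_lt.2 huv)
  -- key scaling estimate for finv
  have keyA : ∀ v V : ℝ, 0 < v → v ≤ V → finv v ≤ finv V * (c * v / V) ^ β := by
    intro v V hv hvV
    have hV : 0 < V := lt_of_lt_of_le hv hvV
    have hx := (hright v hv).1
    have hX := (hright V hV).1
    have hxX : finv v ≤ finv V := hfinvmono v V hv hvV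
    rcases le_or_gt 1 (c * v / V) with h1 | h1
    · have h2 : (1:ℝ) ≤ (c * v / V) ^ β := Real.one_le_rpow h1 hβ0.le
      nlinarith
    · have hscal' := hscal (finv v) (finv V) hx hxX
      rw [(hright v hv).2, (hright V hV).2] at hscal'
      have hratio : (0:ℝ) < finv V / finv v := by positivity
      have h2 : V / (c * v) ≤ (finv V / finv v) ^ γ := by
        rw [div_le_iff₀ hv] at hscal'
        rw [div_le_iff₀ (by positivity)]
        calc V = (V / v) * v := by field_simp
        _ ≤ (c * (finv V / finv v) ^ γ) * v := by
            apply mul_le_mul_of_nonneg_right _ hv.le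
            rw [div_le_iff₀ hv]; linarith
        _ = (finv V / finv v) ^ γ * (c * v) := by ring
      have hbase : (1:ℝ) ≤ V / (c * v) := by
        rw [le_div_iff₀ (by positivity)]
        rw [div_lt_iff₀ hV] at h1
        linarith
      have h3 : (V / (c * v)) ^ (1/γ) ≤ finv V / finv v := by
        calc (V / (c * v)) ^ (1/γ) ≤ ((finv V / finv v) ^ γ) ^ (1/γ) :=
              Real.rpow_le_rpow (by positivity) h2 (by positivity)
        _ = finv V / finv v := by
              rw [one_div, Real.rpow_rpow_inv hratio.le hγ.ne']
      have h4 : (V / (c * v)) ^ β ≤ finv V / finv v :=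
        le_trans (Real.rpow_le_rpow_of_exponent_le hbase hβinvγ) h3
      have h5 : (c * v / V) ^ β = ((V / (c * v)) ^ β)⁻¹ := by
        rw [← Real.inv_rpow (by positivity), inv_div]
      have hp : (0:ℝ) < (V / (c * v)) ^ β := Real.rpow_pos_of_pos (by positivity) β
      rw [h5, ← div_eq_mul_inv, le_div_iff₀ hp]
      calc finv v * (V / (c * v)) ^ β ≤ finv v * (finv V / finv v) :=
            mul_le_mul_of_nonneg_left h4 hx.le
      _ = finv V := by field_simp
  -- constants
  set vb : ℝ := (volume (Metric.ball (0 : EuclideanSpace ℝ (Fin d)) 1)).toReal with hvbdef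
  have hvb : 0 < vb :=
    ENNReal.toReal_pos (Metric.measure_ball_pos _ _ one_pos).ne' measure_ball_lt_top.ne
  set A1 : ℝ := c ^ β * 2 ^ (1 - β) / (1 - β) with hA1def
  have hA1 : 0 < A1 := by
    have h2 : (0:ℝ) < 2 ^ (1 - β) := Real.rpow_pos_of_pos (by norm_num) _
    have hcb : (0:ℝ) < c ^ β := Real.rpow_pos_of_pos hc _
    have : (0:ℝ) < 1 - β := by linarith
    positivity
  set CC : ℝ := A1 * c ^ β * d * vb / (1 - β * γ) with hCCdef
  have hCC : 0 < CC := by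
    have hcb : (0:ℝ) < c ^ β := Real.rpow_pos_of_pos hc _
    have h1 : (0:ℝ) < 1 - β * γ := by linarith
    have hd' : (0:ℝ) < d := by exact_mod_cast hd
    positivity
  -- Level 3 : the inner integral in r
  have L3 : ∀ s : ℝ, 0 < s → ∀ ρ : ℝ, 0 < ρ →
      (∫ r in Set.Ioc (f ρ⁻¹)⁻¹ (2 * s ^ α), (finv r⁻¹) ^ (d + 1) * s ^ (-α - 1))
        ≤ A1 * (ρ⁻¹) ^ (d + 1) * (f ρ⁻¹) ^ (-β) * s ^ (-(α * β) - 1) := by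
    intro s hs ρ hρ
    have hρinv : (0:ℝ) < ρ⁻¹ := by positivity
    set V : ℝ := f ρ⁻¹ with hVdef
    have hVpos : 0 < V := hfpos _ hρinv
    set T : ℝ := 2 * s ^ α with hTdef
    have hsα : (0:ℝ) < s ^ α := Real.rpow_pos_of_pos hs _
    have hT : 0 < T := by positivity
    have hsexp0 : (0:ℝ) < s ^ (-α - 1) := Real.rpow_pos_of_pos hs _
    set K : ℝ := (ρ⁻¹) ^ (d + 1) * (c ^ β * V ^ (-β) * s ^ (-α - 1)) with hKdef
    have hcb : (0:ℝ) < c ^ β := Real.rpow_pos_of_pos hc _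
    have hVβ : (0:ℝ) < V ^ (-β) := Real.rpow_pos_of_pos hVpos _
    have hK0 : 0 ≤ K := by positivity
    have hbnd : ∀ r ∈ Set.Ioc V⁻¹ T, (finv r⁻¹) ^ (d + 1) * s ^ (-α - 1) ≤ K * r ^ (-β) := by
      intro r hr
      have hV0 : (0:ℝ) < V⁻¹ := by positivity
      have hrpos : 0 < r := lt_trans hV0 hr.1
      have hrinv : 0 < r⁻¹ := by positivity
      have hle : r⁻¹ ≤ V := by
        rw [← inv_inv V]
        exact (inv_anti₀ hV0 hr.1.le)
      have hA := keyA r⁻¹ V hrinv hle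
      rw [hVdef] at hA
      rw [hleft ρ⁻¹ hρinv] at hA
      rw [← hVdef] at hA
      have hmon : finv r⁻¹ ≤ ρ⁻¹ := by
        have := hfinvmono r⁻¹ V hrinv hle
        rwa [hVdef, hleft ρ⁻¹ hρinv] at this
      have hfinvp : 0 < finv r⁻¹ := (hright _ hrinv).1
      have hpow : (finv r⁻¹) ^ (d + 1) ≤ (ρ⁻¹) ^ d * (ρ⁻¹ * (c * r⁻¹ / V) ^ β) := by
        rw [pow_succ]
        exact mul_le_mul (pow_le_pow_left₀ hfinvp.le hmon d) hA hfinvp.le (by positivity)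
      have hsplit : (c * r⁻¹ / V) ^ β = c ^ β * V ^ (-β) * r ^ (-β) := by
        rw [Real.div_rpow (by positivity) hVpos.le,
          Real.mul_rpow hc.le hrinv.le, Real.inv_rpow hrpos.le,
          ← Real.rpow_neg hrpos.le, div_eq_mul_inv, ← Real.rpow_neg hVpos.le]
        ring
      calc (finv r⁻¹) ^ (d + 1) * s ^ (-α - 1)
          ≤ ((ρ⁻¹) ^ d * (ρ⁻¹ * (c * r⁻¹ / V) ^ β)) * s ^ (-α - 1) :=
            mul_le_mul_of_nonneg_right hpow hsexp0.le
        _ = K * r ^ (-β) := by rw [hsplit, hKdef, pow_succ]; ring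
    have hint0 : IntegrableOn (fun r : ℝ => r ^ (-β)) (Set.Ioc 0 T) volume :=
      (intervalIntegral.intervalIntegrable_rpow' (by linarith : (-1:ℝ) < -β)).1
    have hIntg : IntegrableOn (fun r : ℝ => K * r ^ (-β)) (Set.Ioc V⁻¹ T) volume :=
      (hint0.mono_set (Set.Ioc_subset_Ioc_left (by positivity))).const_mul K
    have step1 : (∫ r in Set.Ioc V⁻¹ T, (finv r⁻¹) ^ (d + 1) * s ^ (-α - 1))
        ≤ ∫ r in Set.Ioc V⁻¹ T, K * r ^ (-β) := by
      apply integral_mono_of_nonneg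
      · refine (ae_restrict_iff' measurableSet_Ioc).2 (Filter.Eventually.of_forall ?_)
        intro r hr
        have hV0 : (0:ℝ) < V⁻¹ := by positivity
        have hrpos : 0 < r := lt_trans hV0 hr.1
        have hfinvp : 0 < finv r⁻¹ := (hright _ (by positivity)).1
        positivity
      · exact hIntg
      · exact (ae_restrict_iff' measurableSet_Ioc).2 (Filter.Eventually.of_forall hbnd)
    have step3 : (∫ r in Set.Ioc V⁻¹ T, r ^ (-β)) ≤ ∫ r in Set.Ioc 0 T, r ^ (-β) := by
      apply setIntegral_mono_set hint0
      · refine (ae_restrict_iff' measurableSet_Ioc).2 (Filter.Eventually.of_forall ?_)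
        intro r hr
        exact Real.rpow_nonneg hr.1.le _
      · exact (Set.Ioc_subset_Ioc_left (by positivity)).eventuallyLE
    have step4 : (∫ r in Set.Ioc 0 T, r ^ (-β)) = T ^ (1 - β) / (1 - β) := by
      rw [← intervalIntegral.integral_of_le hT.le,
        integral_rpow (Or.inl (by linarith)), Real.zero_rpow (by linarith)]
      ring_nf
    have hT1 : T ^ (1 - β) = 2 ^ (1 - β) * s ^ (α * (1 - β)) := by
      rw [hTdef, Real.mul_rpow (by norm_num) hsα.le, ← Real.rpow_mul hs.le]
    have hsexp : s ^ (-α - 1) * s ^ (α * (1 - β)) = s ^ (-(α * β) - 1) := by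
      rw [← Real.rpow_add hs]; congr 1; ring
    calc (∫ r in Set.Ioc V⁻¹ T, (finv r⁻¹) ^ (d + 1) * s ^ (-α - 1))
        ≤ ∫ r in Set.Ioc V⁻¹ T, K * r ^ (-β) := step1
      _ = K * ∫ r in Set.Ioc V⁻¹ T, r ^ (-β) := integral_const_mul K _
      _ ≤ K * ∫ r in Set.Ioc 0 T, r ^ (-β) := mul_le_mul_of_nonneg_left step3 hK0
      _ = K * (T ^ (1 - β) / (1 - β)) := by rw [step4]
      _ = A1 * (ρ⁻¹) ^ (d + 1) * V ^ (-β) * s ^ (-(α * β) - 1) := by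
          rw [hT1, hKdef, hA1def, ← hsexp]
          have h1β : (1:ℝ) - β ≠ 0 := by linarith
          field_simp
  refine ⟨CC / (α * β), by positivity, fun b hb => ?_⟩
  have hbinv : (0:ℝ) < b⁻¹ := by positivity
  have hfb : 0 < f b⁻¹ := hfpos _ hbinv
  set s0 : ℝ := f b⁻¹ ^ (-(1/α)) with hs0def
  have hs0 : 0 < s0 := Real.rpow_pos_of_pos hfb _
  have hs0a : s0 ^ (-α) = f b⁻¹ := by
    rw [hs0def, ← Real.rpow_mul hfb.le, show -(1/α) * -α = 1 by field_simp, Real.rpow_one]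
  have hfbβ : (0:ℝ) < (f b⁻¹) ^ (-β) := Real.rpow_pos_of_pos hfb _
  set φfun : ℝ → ℝ := fun ρ => (ρ⁻¹) ^ (d+1) * ρ ^ (β*γ) with hφdef
  set Ψ : ℝ → ℝ := Set.indicator (Set.Icc b b⁻¹) φfun with hΨdef
  have hφnonneg : ∀ ρ ∈ Set.Icc b b⁻¹, 0 ≤ φfun ρ := by
    intro ρ hρ
    have hρ0 : (0:ℝ) < ρ := lt_of_lt_of_le hb hρ.1
    rw [hφdef]
    positivity
  have hΨnonneg : ∀ ρ, 0 ≤ Ψ ρ := fun ρ => Set.indicator_nonneg hφnonneg ρ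
  -- integrability of Ψ ∘ norm
  set Ann : Set (EuclideanSpace ℝ (Fin d)) := Metric.closedBall 0 b⁻¹ \ Metric.ball 0 b
    with hAnndef
  have hAnnMeas : MeasurableSet Ann := measurableSet_closedBall.diff measurableSet_ball
  have hAnnComp : IsCompact Ann := (isCompact_closedBall _ _).diff Metric.isOpen_ball
  have hAnnmem : ∀ y : EuclideanSpace ℝ (Fin d), y ∈ Ann ↔ ‖y‖ ∈ Set.Icc b b⁻¹ := by
    intro y
    simp [hAnndef, Set.mem_Icc, mem_closedBall_zero_iff, mem_ball_zero_iff, not_lt, and_comm]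
  have hcomp : (fun y : EuclideanSpace ℝ (Fin d) => Ψ ‖y‖)
      = Set.indicator Ann (fun y => φfun ‖y‖) := by
    funext y
    by_cases hmem : ‖y‖ ∈ Set.Icc b b⁻¹
    · rw [hΨdef, Set.indicator_of_mem hmem, Set.indicator_of_mem ((hAnnmem y).2 hmem)]
    · rw [hΨdef, Set.indicator_of_notMem hmem,
        Set.indicator_of_notMem (fun hmm => hmem ((hAnnmem y).1 hmm))]
  have hφcont : ContinuousOn (fun y : EuclideanSpace ℝ (Fin d) => φfun ‖y‖) Ann := by
    have hne : ∀ y ∈ Ann, ‖y‖ ≠ 0 :=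
      fun y hy => (lt_of_lt_of_le hb ((hAnnmem y).1 hy).1).ne'
    rw [hφdef]
    exact ((continuous_norm.continuousOn.inv₀ hne).pow _).mul
      (continuous_norm.continuousOn.rpow_const (fun y hy => Or.inl (hne y hy)))
  have hΨint : Integrable (fun y : EuclideanSpace ℝ (Fin d) => Ψ ‖y‖) volume := by
    rw [hcomp]
    exact (integrable_indicator_iff hAnnMeas).2 (hφcont.integrableOn_compact hAnnComp)
  -- polar coordinates
  have hpolar := integral_fun_norm_addHaar (volume : Measure (EuclideanSpace ℝ (Fin d))) Ψ
  rw [finrank_euclideanSpace_fin, measureReal_def, ← hvbdef] at hpolar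
  -- radial integral bound
  have hradial : (∫ ρ in Set.Ioi (0:ℝ), ρ ^ (d-1) • Ψ ρ) ≤ b ^ (β*γ-1) / (1-β*γ) := by
    have h1 : ∀ ρ : ℝ, ρ ^ (d-1) • Ψ ρ
        = Set.indicator (Set.Icc b b⁻¹) (fun ρ => ρ ^ (d-1) * φfun ρ) ρ := by
      intro ρ
      rw [smul_eq_mul, hΨdef]
      by_cases hmem : ρ ∈ Set.Icc b b⁻¹
      · rw [Set.indicator_of_mem hmem, Set.indicator_of_mem hmem]
      · rw [Set.indicator_of_notMem hmem, Set.indicator_of_notMem hmem, mul_zero]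
    simp_rw [h1]
    rw [setIntegral_indicator measurableSet_Icc]
    have hIoiIcc : Set.Ioi (0:ℝ) ∩ Set.Icc b b⁻¹ = Set.Icc b b⁻¹ :=
      Set.inter_eq_self_of_subset_right (fun x hx => lt_of_lt_of_le hb hx.1)
    rw [hIoiIcc]
    have h2 : ∀ ρ ∈ Set.Icc b b⁻¹, ρ ^ (d-1) * φfun ρ = ρ ^ (β*γ-2) := by
      intro ρ hρ
      have hρ0 : (0:ℝ) < ρ := lt_of_lt_of_le hb hρ.1
      rw [hφdef]
      have hne : ρ ≠ 0 := hρ0.ne'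
      have e1 : (ρ:ℝ) ^ (d-1) * (ρ⁻¹) ^ (d+1) = (ρ^2)⁻¹ := by
        calc ρ^(d-1) * (ρ⁻¹)^(d+1) = ρ^(d-1) * (ρ^(d+1))⁻¹ := by rw [inv_pow]
          _ = ρ^(d-1) * (ρ^(d-1) * ρ^2)⁻¹ := by
              rw [← pow_add, show d-1+2 = d+1 by omega]
          _ = (ρ^2)⁻¹ := by field_simp
      calc ρ^(d-1) * ((ρ⁻¹)^(d+1) * ρ^(β*γ)) = (ρ^(d-1) * (ρ⁻¹)^(d+1)) * ρ^(β*γ) := by ring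
        _ = (ρ^2)⁻¹ * ρ^(β*γ) := by rw [e1]
        _ = ρ^(β*γ-2) := by
            rw [Real.rpow_sub hρ0, show (2:ℝ) = ((2:ℕ):ℝ) by norm_num, Real.rpow_natCast]
            ring
    rw [setIntegral_congr_fun measurableSet_Icc h2]
    have hint : IntegrableOn (fun ρ : ℝ => ρ ^ (β*γ-2)) (Set.Ici b) volume := by
      rw [integrableOn_Ici_iff_integrableOn_Ioi]
      exact integrableOn_Ioi_rpow_of_lt (by linarith) hb
    have h3 : (∫ ρ in Set.Icc b b⁻¹, ρ ^ (β*γ-2)) ≤ ∫ ρ in Set.Ici b, ρ ^ (β*γ-2) := by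
      apply setIntegral_mono_set hint
      · refine (ae_restrict_iff' measurableSet_Ici).2 (Filter.Eventually.of_forall ?_)
        intro ρ hρ
        exact Real.rpow_nonneg (le_trans hb.le hρ) _
      · exact (Set.Icc_subset_Ici_self).eventuallyLE
    refine le_trans h3 ?_
    rw [integral_Ici_eq_integral_Ioi, integral_Ioi_rpow_of_lt (by linarith) hb]
    rw [show β*γ-2+1 = β*γ-1 by ring]
    rw [neg_div, ← div_neg, show -(β*γ-1) = 1-β*γ by ring]
  -- Level 2
  have L2 : ∀ s ∈ Set.Ioi s0,
      (∫ y in {y : EuclideanSpace ℝ (Fin d) | b ≤ ‖y‖ ∧ ‖y‖ ≤ finv (s ^ (-α))},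
        ∫ r in Set.Ioc (f ‖y‖⁻¹)⁻¹ (2 * s ^ α), (finv r⁻¹) ^ (d + 1) * s ^ (-α - 1))
      ≤ (CC * (f b⁻¹) ^ (-β) * b⁻¹) * s ^ (-(α*β)-1) := by
    intro s hs
    rw [Set.mem_Ioi] at hs
    have hss : 0 < s := lt_trans hs0 hs
    have hspow : (0:ℝ) < s ^ (-(α*β)-1) := Real.rpow_pos_of_pos hss _
    have hbpow : (0:ℝ) < b ^ (-(β*γ)) := Real.rpow_pos_of_pos hb _
    have hcb : (0:ℝ) < c ^ β := Real.rpow_pos_of_pos hc _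
    set k : ℝ := A1 * c^β * b^(-(β*γ)) * (f b⁻¹)^(-β) * s^(-(α*β)-1) with hkdef
    have hk0 : (0:ℝ) ≤ k := by positivity
    set S : Set (EuclideanSpace ℝ (Fin d)) := {y | b ≤ ‖y‖ ∧ ‖y‖ ≤ finv (s ^ (-α))}
      with hSdef
    have hSmeas : MeasurableSet S := measurable_norm measurableSet_Icc
    have hsa : (0:ℝ) < s ^ (-α) := Real.rpow_pos_of_pos hss _
    have hsa' : s ^ (-α) ≤ f b⁻¹ := by
      rw [← hs0a]
      exact Real.rpow_le_rpow_of_nonpos hs0 hs.le (by linarith)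
    have hpt : ∀ y ∈ S, (∫ r in Set.Ioc (f ‖y‖⁻¹)⁻¹ (2 * s ^ α),
        (finv r⁻¹) ^ (d + 1) * s ^ (-α - 1)) ≤ k * Ψ ‖y‖ := by
      intro y hy
      have hρb : b ≤ ‖y‖ := hy.1
      have hρpos : 0 < ‖y‖ := lt_of_lt_of_le hb hρb
      have hρub : ‖y‖ ≤ b⁻¹ := by
        refine le_trans hy.2 ?_
        have := hfinvmono _ _ hsa hsa'
        rwa [hleft b⁻¹ hbinv] at this
      have hΨeq : Ψ ‖y‖ = φfun ‖y‖ := Set.indicator_of_mem (Set.mem_Icc.2 ⟨hρb, hρub⟩) _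
      refine le_trans (L3 s hss ‖y‖ hρpos) ?_
      have hinv : ‖y‖⁻¹ ≤ b⁻¹ := inv_anti₀ hb hρb
      have hfρ : 0 < f ‖y‖⁻¹ := hfpos _ (by positivity)
      have hsc := hscal ‖y‖⁻¹ b⁻¹ (by positivity) hinv
      have hq : b⁻¹ / ‖y‖⁻¹ = ‖y‖ / b := by
        field_simp
      rw [hq] at hsc
      have h2 : ((f b⁻¹) / (f ‖y‖⁻¹)) ^ β ≤ c ^ β * (‖y‖/b) ^ (γ*β) := by
        calc ((f b⁻¹)/(f ‖y‖⁻¹))^β ≤ (c * (‖y‖/b)^γ)^β :=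
              Real.rpow_le_rpow (by positivity) hsc hβ0.le
        _ = c^β * (‖y‖/b)^(γ*β) := by
            rw [Real.mul_rpow hc.le (Real.rpow_nonneg (by positivity) _),
              ← Real.rpow_mul (by positivity)]
      have hLHS : ((f b⁻¹)/(f ‖y‖⁻¹))^β = (f b⁻¹)^β * (f ‖y‖⁻¹)^(-β) := by
        rw [Real.div_rpow hfb.le hfρ.le, div_eq_mul_inv, ← Real.rpow_neg hfρ.le]
      have hfb2 : (f b⁻¹)^(-β) * (f b⁻¹)^β = 1 := by
        rw [← Real.rpow_add hfb]; simp
      have h3 : (f ‖y‖⁻¹)^(-β) ≤ c^β * (‖y‖/b)^(γ*β) * (f b⁻¹)^(-β) := by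
        calc (f ‖y‖⁻¹)^(-β) = (f b⁻¹)^(-β) * (((f b⁻¹)/(f ‖y‖⁻¹))^β) := by
              rw [hLHS, ← mul_assoc, hfb2, one_mul]
          _ ≤ (f b⁻¹)^(-β) * (c^β * (‖y‖/b)^(γ*β)) :=
              mul_le_mul_of_nonneg_left h2 hfbβ.le
          _ = c^β * (‖y‖/b)^(γ*β) * (f b⁻¹)^(-β) := by ring
      have h5 : (‖y‖/b)^(γ*β) = ‖y‖^(β*γ) * b^(-(β*γ)) := by
        rw [Real.div_rpow (norm_nonneg y) hb.le, div_eq_mul_inv, ← Real.rpow_neg hb.le,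
          show γ*β = β*γ from mul_comm γ β]
      rw [hΨeq, hφdef, hkdef]
      calc A1 * (‖y‖⁻¹)^(d+1) * (f ‖y‖⁻¹)^(-β) * s^(-(α*β)-1)
          = (A1 * (‖y‖⁻¹)^(d+1) * s^(-(α*β)-1)) * ((f ‖y‖⁻¹)^(-β)) := by ring
        _ ≤ (A1 * (‖y‖⁻¹)^(d+1) * s^(-(α*β)-1)) * (c^β * (‖y‖/b)^(γ*β) * (f b⁻¹)^(-β)) := by
            apply mul_le_mul_of_nonneg_left h3 (by positivity)
        _ = A1 * c^β * b^(-(β*γ)) * (f b⁻¹)^(-β) * s^(-(α*β)-1)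
              * ((‖y‖⁻¹)^(d+1) * ‖y‖^(β*γ)) := by rw [h5]; ring
    have hinner_nonneg : ∀ y ∈ S, 0 ≤ ∫ r in Set.Ioc (f ‖y‖⁻¹)⁻¹ (2 * s ^ α),
        (finv r⁻¹) ^ (d + 1) * s ^ (-α - 1) := by
      intro y hy
      have hρpos : 0 < ‖y‖ := lt_of_lt_of_le hb hy.1
      have hfρ : 0 < f ‖y‖⁻¹ := hfpos _ (by positivity)
      apply setIntegral_nonneg measurableSet_Ioc
      intro r hr
      have hrpos : 0 < r := lt_trans (by positivity) hr.1
      have hfinvp := (hright r⁻¹ (by positivity)).1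
      have hsp : (0:ℝ) ≤ s ^ (-α-1) := (Real.rpow_pos_of_pos hss _).le
      positivity
    calc (∫ y in S, ∫ r in Set.Ioc (f ‖y‖⁻¹)⁻¹ (2 * s ^ α),
            (finv r⁻¹) ^ (d + 1) * s ^ (-α - 1))
        ≤ ∫ y in S, k * Ψ ‖y‖ := by
          apply integral_mono_of_nonneg
          · exact (ae_restrict_iff' hSmeas).2 (Filter.Eventually.of_forall hinner_nonneg)
          · exact (hΨint.const_mul k).integrableOn
          · exact (ae_restrict_iff' hSmeas).2 (Filter.Eventually.of_forall hpt)
      _ ≤ ∫ y, k * Ψ ‖y‖ := setIntegral_le_integral (hΨint.const_mul k)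
            (Filter.Eventually.of_forall fun y => mul_nonneg hk0 (hΨnonneg _))
      _ = k * ∫ y, Ψ ‖y‖ := integral_const_mul k _
      _ = k * (d • vb • ∫ ρ in Set.Ioi (0:ℝ), ρ ^ (d-1) • Ψ ρ) := by rw [hpolar]
      _ ≤ k * (d * (vb * (b ^ (β*γ-1) / (1-β*γ)))) := by
          rw [nsmul_eq_mul, smul_eq_mul]
          apply mul_le_mul_of_nonneg_left _ hk0
          apply mul_le_mul_of_nonneg_left _ (Nat.cast_nonneg d)
          exact mul_le_mul_of_nonneg_left hradial hvb.le
      _ = (CC * (f b⁻¹) ^ (-β) * b⁻¹) * s ^ (-(α*β)-1) := by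
          have hbb : b^(-(β*γ)) * b^(β*γ-1) = b⁻¹ := by
            rw [← Real.rpow_add hb, show -(β*γ) + (β*γ-1) = -1 by ring, Real.rpow_neg_one]
          rw [hkdef, hCCdef, ← hbb]
          have h1βγ : (1:ℝ) - β * γ ≠ 0 := by linarith
          field_simp
  -- Level 1
  have houter_nonneg : ∀ s ∈ Set.Ioi s0, 0 ≤
      ∫ y in {y : EuclideanSpace ℝ (Fin d) | b ≤ ‖y‖ ∧ ‖y‖ ≤ finv (s ^ (-α))},
        ∫ r in Set.Ioc (f ‖y‖⁻¹)⁻¹ (2 * s ^ α), (finv r⁻¹) ^ (d + 1) * s ^ (-α - 1) := by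
    intro s hs
    rw [Set.mem_Ioi] at hs
    have hss : 0 < s := lt_trans hs0 hs
    apply setIntegral_nonneg (measurable_norm measurableSet_Icc)
    intro y hy
    have hρpos : 0 < ‖y‖ := lt_of_lt_of_le hb hy.1
    have hfρ : 0 < f ‖y‖⁻¹ := hfpos _ (by positivity)
    apply setIntegral_nonneg measurableSet_Ioc
    intro r hr
    have hrpos : 0 < r := lt_trans (by positivity) hr.1
    have hfinvp := (hright r⁻¹ (by positivity)).1
    have hsp : (0:ℝ) ≤ s ^ (-α-1) := (Real.rpow_pos_of_pos hss _).le
    positivity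
  have hint1 : IntegrableOn (fun s : ℝ => (CC * (f b⁻¹) ^ (-β) * b⁻¹) * s ^ (-(α*β)-1))
      (Set.Ioi s0) volume :=
    (integrableOn_Ioi_rpow_of_lt (by nlinarith) hs0).const_mul _
  calc (∫ s in Set.Ioi s0,
        ∫ y in {y : EuclideanSpace ℝ (Fin d) | b ≤ ‖y‖ ∧ ‖y‖ ≤ finv (s ^ (-α))},
          ∫ r in Set.Ioc (f ‖y‖⁻¹)⁻¹ (2 * s ^ α), (finv r⁻¹) ^ (d + 1) * s ^ (-α - 1))
      ≤ ∫ s in Set.Ioi s0, (CC * (f b⁻¹) ^ (-β) * b⁻¹) * s ^ (-(α*β)-1) := by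
        apply integral_mono_of_nonneg
        · exact (ae_restrict_iff' measurableSet_Ioi).2 (Filter.Eventually.of_forall houter_nonneg)
        · exact hint1
        · exact (ae_restrict_iff' measurableSet_Ioi).2 (Filter.Eventually.of_forall L2)
    _ = (CC * (f b⁻¹) ^ (-β) * b⁻¹) * (s0 ^ (-(α*β)) / (α*β)) := by
        rw [integral_const_mul, integral_Ioi_rpow_of_lt (by nlinarith) hs0]
        rw [show -(α*β)-1+1 = -(α*β) by ring, neg_div_neg_eq]
    _ = CC / (α * β) * b⁻¹ := by
        have hs0b : s0 ^ (-(α*β)) = (f b⁻¹) ^ β := by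
          rw [hs0def, ← Real.rpow_mul hfb.le, show -(1/α) * -(α*β) = β by field_simp]
        have hfb2 : (f b⁻¹)^(-β) * (f b⁻¹)^β = 1 := by
          rw [← Real.rpow_add hfb]; simp
        rw [hs0b, div_eq_mul_inv, div_eq_mul_inv]
        linear_combination (CC * b⁻¹ * (α*β)⁻¹) * hfb2
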